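/- In the special case $\Lambda = n^{-1} I_K$ for $n > 0$, for any $\theta \in \mathbb{R}^K$ we have $n\,\theta^\top R_K^\top (R_K R_K^\top)^{-1} R_K \theta = \frac{n}{K}\sum_{1\leq k_1 < k_2 \leq K}(\theta_{k_1}-\theta_{k_2})^2$, where $R_K$ is the $(K-1)\times K$ successive-differences matrix. -/

import Mathlib

open Matrix Finset

/-- The `(K-1) × K` successive-differences matrix. -/
def diffMatrix (K : ℕ) : Matrix (Fin (K - 1)) (Fin K) ℝ :=
  fun i j => if j.val = i.val then 1 else if j.val = i.val + 1 then -1 else 0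

namespace WaldAux

lemma sum_ite_val {n t : ℕ} (f : Fin n → ℝ) :
    ∑ m : Fin n, (if m.val = t then f m else 0) = if h : t < n then f ⟨t, h⟩ else 0 := by
  split_ifs with h
  · rw [Finset.sum_eq_single (⟨t, h⟩ : Fin n)]
    · simp
    · intro b _ hb
      have hb' : b.val ≠ t := fun hc => hb (Fin.ext hc)
      rw [if_neg hb']
    · simp
  · apply Finset.sum_eq_zero; intro m _; rw [if_neg]; omega

lemma sum_ite_succ {n t : ℕ} (f : Fin n → ℝ) :
    ∑ m : Fin n, (if m.val + 1 = t then f m else 0)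
      = if h : t - 1 < n ∧ 1 ≤ t then f ⟨t - 1, h.1⟩ else 0 := by
  split_ifs with h
  · rw [Finset.sum_eq_single (⟨t - 1, h.1⟩ : Fin n)]
    · rw [if_pos]; show t - 1 + 1 = t; omega
    · intro b _ hb
      have hb' : b.val ≠ t - 1 := fun hc => hb (Fin.ext hc)
      rw [if_neg (by omega)]
    · simp
  · apply Finset.sum_eq_zero; intro m _; rw [if_neg]; omega

lemma col_sum {K : ℕ} (x : Fin (K - 1) → ℝ) (j : Fin K) :
    ∑ m : Fin (K - 1), diffMatrix K m j * x m
      = (if h : j.val < K - 1 then x ⟨j.val, h⟩ else 0)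
        - (if h : j.val - 1 < K - 1 ∧ 1 ≤ j.val then x ⟨j.val - 1, h.1⟩ else 0) := by
  have : ∀ m : Fin (K - 1), diffMatrix K m j * x m
      = (if m.val = j.val then x m else 0) + (if m.val + 1 = j.val then -x m else 0) := by
    intro m
    simp only [diffMatrix]
    split_ifs <;> first | ring1 | (exfalso; omega)
  rw [Finset.sum_congr rfl (fun m _ => this m), Finset.sum_add_distrib,
    sum_ite_val, sum_ite_succ]
  split_ifs <;> ring

lemma row_sum {K : ℕ} (hK : 2 ≤ K) (m : Fin (K - 1)) :
    ∑ j : Fin K, diffMatrix K m j = 0 := by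
  have : ∀ j : Fin K, diffMatrix K m j
      = (if j.val = m.val then (1:ℝ) else 0) + (if j.val = m.val + 1 then (-1:ℝ) else 0) := by
    intro j
    simp only [diffMatrix]
    split_ifs <;> first | ring1 | (exfalso; omega)
  rw [Finset.sum_congr rfl (fun j _ => this j), Finset.sum_add_distrib,
    sum_ite_val, sum_ite_val]
  have hm := m.isLt
  rw [dif_pos (by omega), dif_pos (by omega)]
  ring

/-- `Rᵀ` has trivial kernel. -/
lemma mulVec_transpose_eq_zero {K : ℕ} (hK : 2 ≤ K) (x : Fin (K - 1) → ℝ)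
    (h : (diffMatrix K)ᵀ.mulVec x = 0) : x = 0 := by
  have key : ∀ t : ℕ, ∀ ht : t < K,
      (if h : t < K - 1 then x ⟨t, h⟩ else 0)
        - (if h : t - 1 < K - 1 ∧ 1 ≤ t then x ⟨t - 1, h.1⟩ else 0) = 0 := by
    intro t ht
    have := congrFun h ⟨t, ht⟩
    simpa [Matrix.mulVec, dotProduct, Matrix.transpose_apply,
      ← col_sum x (⟨t, ht⟩ : Fin K)] using this
  have main : ∀ i : ℕ, ∀ hi : i < K - 1, x ⟨i, hi⟩ = 0 := by
    intro i
    induction i with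
    | zero =>
      intro hi
      have := key 0 (by omega)
      rw [dif_pos (by omega), dif_neg (by omega)] at this
      simpa using this
    | succ t ih =>
      intro hi
      have := key (t + 1) (by omega)
      rw [dif_pos (by omega), dif_pos (by constructor <;> omega)] at this
      have ht : x ⟨t + 1 - 1, by omega⟩ = 0 := ih (by omega)
      rw [ht] at this
      simpa using this
  funext m
  have hm := m.isLt
  have := main m.val hm
  simpa using this

lemma RRt_det_ne_zero {K : ℕ} (hK : 2 ≤ K) :
    (diffMatrix K * (diffMatrix K)ᵀ).det ≠ 0 := by
  intro hdet
  obtain ⟨v, hv, hv0⟩ := (Matrix.exists_mulVec_eq_zero_iff).2 hdet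
  apply hv
  have hw : (diffMatrix K)ᵀ.mulVec v = 0 := by
    have h1 : ((diffMatrix K)ᵀ.mulVec v) ⬝ᵥ ((diffMatrix K)ᵀ.mulVec v) = 0 := by
      have heq : ((diffMatrix K)ᵀ.mulVec v) ⬝ᵥ ((diffMatrix K)ᵀ.mulVec v)
          = v ⬝ᵥ (diffMatrix K * (diffMatrix K)ᵀ).mulVec v := by
        rw [← Matrix.mulVec_mulVec, ← Matrix.vecMul_transpose, Matrix.dotProduct_mulVec,
          Matrix.transpose_transpose]
      rw [heq, hv0, dotProduct_zero]
    exact dotProduct_self_eq_zero.mp h1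
  exact mulVec_transpose_eq_zero hK v hw

/-- The centering projection. -/
noncomputable def P (K : ℕ) : Matrix (Fin K) (Fin K) ℝ :=
  1 - (K : ℝ)⁻¹ • Matrix.of (fun _ _ => (1:ℝ))

lemma P_apply {K : ℕ} (i j : Fin K) :
    P K i j = (if i = j then 1 else 0) - (K : ℝ)⁻¹ := by
  simp [P, Matrix.one_apply, Matrix.sub_apply]

lemma P_symm {K : ℕ} : (P K)ᵀ = P K := by
  ext i j
  simp only [Matrix.transpose_apply, P_apply]
  congr 1
  simp [eq_comm]

lemma P_mul_Rt {K : ℕ} (hK : 2 ≤ K) : P K * (diffMatrix K)ᵀ = (diffMatrix K)ᵀ := by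
  ext i m
  simp only [Matrix.mul_apply, Matrix.transpose_apply, P_apply, sub_mul]
  rw [Finset.sum_sub_distrib]
  have h1 : ∑ j : Fin K, (if i = j then (1:ℝ) else 0) * diffMatrix K m j
      = diffMatrix K m i := by
    rw [Finset.sum_eq_single i] <;> simp +contextual [eq_comm]
  have h2 : ∑ j : Fin K, (K:ℝ)⁻¹ * diffMatrix K m j = 0 := by
    rw [← Finset.mul_sum, row_sum hK]; ring
  rw [h1, h2, sub_zero]

/-- an explicit matrix with `Rᵀ * B = P`. -/
noncomputable def B (K : ℕ) : Matrix (Fin (K - 1)) (Fin K) ℝ :=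
  fun m j => (if j.val ≤ m.val then (1:ℝ) else 0) - ((m.val : ℝ) + 1) / K

lemma Rt_mul_B {K : ℕ} (hK : 2 ≤ K) : (diffMatrix K)ᵀ * B K = P K := by
  have hK0 : (K : ℝ) ≠ 0 := by positivity
  ext i j
  rw [Matrix.mul_apply]
  simp only [Matrix.transpose_apply]
  rw [col_sum (fun m => B K m j) i, P_apply]
  have hiK := i.isLt
  by_cases h1 : i.val < K - 1 <;> by_cases h2 : 1 ≤ i.val
  · -- middle rows
    rw [dif_pos h1, dif_pos ⟨by omega, h2⟩]
    show ((if j.val ≤ i.val then (1:ℝ) else 0) - ((i.val : ℝ) + 1) / K)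
        - ((if j.val ≤ i.val - 1 then (1:ℝ) else 0) - (((i.val - 1 : ℕ) : ℝ) + 1) / K)
      = (if i = j then 1 else 0) - (K : ℝ)⁻¹
    have hc : ((i.val - 1 : ℕ) : ℝ) = (i.val : ℝ) - 1 := by
      push_cast [Nat.cast_sub h2]; ring
    rw [hc]
    by_cases hij : i = j
    · have hv : j.val = i.val := by rw [hij]
      rw [if_pos hij, if_pos (by omega), if_neg (by omega)]
      field_simp
      try ring
    · have hne : i.val ≠ j.val := fun hc => hij (Fin.ext hc)
      rw [if_neg hij]
      by_cases hle : j.val ≤ i.val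
      · rw [if_pos hle, if_pos (by omega)]; field_simp; ring
      · rw [if_neg hle, if_neg (by omega)]; field_simp; ring
  · -- first row : i.val = 0
    have hi0 : i.val = 0 := by omega
    rw [dif_pos h1, dif_neg (by omega)]
    show ((if j.val ≤ i.val then (1:ℝ) else 0) - ((i.val : ℝ) + 1) / K) - 0
      = (if i = j then 1 else 0) - (K : ℝ)⁻¹
    by_cases hij : i = j
    · have hv : j.val = i.val := by rw [hij]
      rw [if_pos (by omega), if_pos hij, hi0]
      push_cast
      field_simp
      try ring
    · have hne : i.val ≠ j.val := fun hc => hij (Fin.ext hc)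
      rw [if_neg (by omega), if_neg hij, hi0]
      push_cast
      field_simp
      try ring
  · -- last row : i.val = K - 1
    have hi : i.val = K - 1 := by omega
    rw [dif_neg h1, dif_pos ⟨by omega, h2⟩]
    show (0:ℝ) - ((if j.val ≤ i.val - 1 then (1:ℝ) else 0) - (((i.val - 1 : ℕ) : ℝ) + 1) / K)
      = (if i = j then 1 else 0) - (K : ℝ)⁻¹
    have hc : ((i.val - 1 : ℕ) : ℝ) = (K : ℝ) - 2 := by
      have h3 : i.val - 1 = K - 2 := by omega
      rw [h3]; push_cast [Nat.cast_sub (by omega : 2 ≤ K)]; ring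
    rw [hc]
    have hjK := j.isLt
    by_cases hij : i = j
    · have hv : j.val = i.val := by rw [hij]
      rw [if_neg (by omega), if_pos hij]
      field_simp
      try ring
    · have hne : i.val ≠ j.val := fun hc => hij (Fin.ext hc)
      rw [if_pos (by omega), if_neg hij]
      field_simp
      try ring
  · omega

lemma proj_eq {k m : ℕ} (R : Matrix (Fin k) (Fin m) ℝ) (Pm : Matrix (Fin m) (Fin m) ℝ)
    (Bm : Matrix (Fin k) (Fin m) ℝ) (hdet : IsUnit (R * Rᵀ).det)
    (hPsymm : Pmᵀ = Pm) (hPRt : Pm * Rᵀ = Rᵀ) (hRtB : Rᵀ * Bm = Pm) :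
    Rᵀ * (R * Rᵀ)⁻¹ * R = Pm := by
  have hMsymm : (R * Rᵀ)ᵀ = R * Rᵀ := by
    rw [Matrix.transpose_mul, Matrix.transpose_transpose]
  have hQsymm : (Rᵀ * (R * Rᵀ)⁻¹ * R)ᵀ = Rᵀ * (R * Rᵀ)⁻¹ * R := by
    rw [Matrix.transpose_mul, Matrix.transpose_mul, Matrix.transpose_transpose,
      Matrix.transpose_nonsing_inv, hMsymm]
    exact (Matrix.mul_assoc _ _ _).symm
  have hQRt : (Rᵀ * (R * Rᵀ)⁻¹ * R) * Rᵀ = Rᵀ := by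
    rw [Matrix.mul_assoc (Rᵀ * (R * Rᵀ)⁻¹) R Rᵀ, Matrix.mul_assoc Rᵀ _ _,
      Matrix.nonsing_inv_mul _ hdet, Matrix.mul_one]
  have hQP : (Rᵀ * (R * Rᵀ)⁻¹ * R) * Pm = Pm := by
    rw [← hRtB, ← Matrix.mul_assoc, hQRt]
  have hPQ : Pm * (Rᵀ * (R * Rᵀ)⁻¹ * R) = Rᵀ * (R * Rᵀ)⁻¹ * R := by
    rw [← Matrix.mul_assoc, ← Matrix.mul_assoc, hPRt]
  have hPQ' : Pm * (Rᵀ * (R * Rᵀ)⁻¹ * R) = Pm := by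
    have h := congrArg Matrix.transpose hQP
    rwa [Matrix.transpose_mul, hPsymm, hQsymm] at h
  rw [← hPQ, hPQ']

lemma Q_eq_P {K : ℕ} (hK : 2 ≤ K) :
    (diffMatrix K)ᵀ * (diffMatrix K * (diffMatrix K)ᵀ)⁻¹ * diffMatrix K = P K := by
  exact proj_eq (diffMatrix K) (P K) (B K)
    (isUnit_iff_ne_zero.2 (RRt_det_ne_zero hK)) P_symm (P_mul_Rt hK) (Rt_mul_B hK)

lemma dot_P {K : ℕ} (θ : Fin K → ℝ) :
    θ ⬝ᵥ (P K).mulVec θ = (∑ i, θ i ^ 2) - (K:ℝ)⁻¹ * (∑ i, θ i) ^ 2 := by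
  simp only [dotProduct, Matrix.mulVec, P_apply]
  have inner : ∀ i, ∑ j, ((if i = j then (1:ℝ) else 0) - (K:ℝ)⁻¹) * θ j
      = θ i - (K:ℝ)⁻¹ * ∑ j, θ j := by
    intro i
    rw [Finset.sum_congr rfl (fun j _ => sub_mul _ _ (θ j)), Finset.sum_sub_distrib,
      ← Finset.mul_sum]
    congr 1
    rw [Finset.sum_eq_single i] <;> simp +contextual [eq_comm]
  calc ∑ i, θ i * ∑ j, ((if i = j then (1:ℝ) else 0) - (K:ℝ)⁻¹) * θ j
      = ∑ i, (θ i ^ 2 - (K:ℝ)⁻¹ * (θ i * ∑ j, θ j)) := by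
        refine Finset.sum_congr rfl fun i _ => ?_
        rw [inner i]; ring
    _ = (∑ i, θ i ^ 2) - (K:ℝ)⁻¹ * (∑ i, θ i) ^ 2 := by
        rw [Finset.sum_sub_distrib, ← Finset.mul_sum, ← Finset.sum_mul]
        ring

lemma pair_sum {K : ℕ} (θ : Fin K → ℝ) :
    ∑ p ∈ Finset.univ.filter (fun p : Fin K × Fin K => p.1 < p.2), (θ p.1 - θ p.2) ^ 2
      = ((K:ℝ) * (∑ i, θ i ^ 2) - (∑ i, θ i) ^ 2) := by
  set f : Fin K × Fin K → ℝ := fun p => (θ p.1 - θ p.2) ^ 2 with hf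
  have total : ∑ p : Fin K × Fin K, f p
      = 2 * ((K:ℝ) * (∑ i, θ i ^ 2) - (∑ i, θ i) ^ 2) := by
    rw [Fintype.sum_prod_type]
    have hrow : ∀ i : Fin K, ∑ j : Fin K, f (i, j)
        = (K:ℝ) * θ i ^ 2 - 2 * θ i * (∑ j, θ j) + ∑ j, θ j ^ 2 := by
      intro i
      have expand : ∀ j : Fin K, f (i, j) = (θ i ^ 2 - 2 * θ i * θ j) + θ j ^ 2 :=
        fun j => by simp only [hf]; ring
      rw [Finset.sum_congr rfl fun j _ => expand j, Finset.sum_add_distrib,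
        Finset.sum_sub_distrib, Finset.sum_const, ← Finset.mul_sum]
      simp [Finset.card_univ, nsmul_eq_mul]
      try ring
    rw [Finset.sum_congr rfl fun i _ => hrow i, Finset.sum_add_distrib,
      Finset.sum_sub_distrib, ← Finset.mul_sum, Finset.sum_const, Finset.card_univ,
      Fintype.card_fin, nsmul_eq_mul]
    have hmid : ∑ i, 2 * θ i * (∑ j, θ j) = 2 * (∑ j, θ j) ^ 2 := by
      rw [← Finset.sum_mul, ← Finset.mul_sum]
      ring
    rw [hmid]
    ring
  have h1 := Finset.sum_filter_add_sum_filter_not Finset.univ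
    (fun p : Fin K × Fin K => p.1 < p.2) f
  have h2 : ∑ p ∈ Finset.univ.filter (fun p : Fin K × Fin K => ¬ p.1 < p.2), f p
      = ∑ p ∈ Finset.univ.filter (fun p : Fin K × Fin K => p.2 < p.1), f p := by
    rw [← Finset.sum_filter_add_sum_filter_not
      (Finset.univ.filter fun p : Fin K × Fin K => ¬ p.1 < p.2)
      (fun p => p.2 < p.1) f, Finset.filter_filter, Finset.filter_filter]
    have e1 : Finset.univ.filter (fun p : Fin K × Fin K => ¬ p.1 < p.2 ∧ p.2 < p.1)
        = Finset.univ.filter (fun p : Fin K × Fin K => p.2 < p.1) := by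
      apply Finset.filter_congr
      intro p _
      constructor
      · exact fun h => h.2
      · exact fun h => ⟨fun h' => absurd h (not_lt.2 (le_of_lt h')), h⟩
    have e2 : ∑ p ∈ Finset.univ.filter
        (fun p : Fin K × Fin K => ¬ p.1 < p.2 ∧ ¬ p.2 < p.1), f p = 0 := by
      apply Finset.sum_eq_zero
      intro p hp
      simp only [Finset.mem_filter] at hp
      have hpe : p.1 = p.2 := le_antisymm (not_lt.1 hp.2.2) (not_lt.1 hp.2.1)
      simp [hf, hpe]
    rw [e1, e2, add_zero]
  have h3 : ∑ p ∈ Finset.univ.filter (fun p : Fin K × Fin K => p.2 < p.1), f p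
      = ∑ p ∈ Finset.univ.filter (fun p : Fin K × Fin K => p.1 < p.2), f p := by
    apply Finset.sum_equiv (Equiv.prodComm (Fin K) (Fin K))
    · intro p; simp [Equiv.prodComm]
    · intro p _
      show (θ p.1 - θ p.2) ^ 2 = (θ p.2 - θ p.1) ^ 2
      ring
  have h4 : (2:ℝ) * ∑ p ∈ Finset.univ.filter (fun p : Fin K × Fin K => p.1 < p.2), f p
      = 2 * ((K:ℝ) * (∑ i, θ i ^ 2) - (∑ i, θ i) ^ 2) := by
    rw [← total, ← h1, h2, h3]
    ring
  have := mul_left_cancel₀ (two_ne_zero) h4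
  exact this

end WaldAux

/-- With `Λ = n⁻¹ I`, the rescaled Wald quadratic form reduces to
`(n/K) ∑_{k₁<k₂} (θ_{k₁} - θ_{k₂})²`. -/
theorem wald_quadratic_form_identity_case (K : ℕ) (hK : 2 ≤ K) (n : ℝ) (hn : 0 < n)
    (θ : Fin K → ℝ) :
    let R := diffMatrix K
    n * (θ ⬝ᵥ (Rᵀ * (R * Rᵀ)⁻¹ * R).mulVec θ) =
      n / (K : ℝ) *
        ∑ p ∈ Finset.univ.filter (fun p : Fin K × Fin K => p.1 < p.2),
          (θ p.1 - θ p.2) ^ 2 := by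
  show n * (θ ⬝ᵥ ((diffMatrix K)ᵀ * (diffMatrix K * (diffMatrix K)ᵀ)⁻¹
      * diffMatrix K).mulVec θ) = _
  rw [WaldAux.Q_eq_P hK, WaldAux.dot_P, WaldAux.pair_sum θ]
  have hK0 : (K:ℝ) ≠ 0 := Nat.cast_ne_zero.2 (by omega)
  rw [div_eq_mul_inv]
  have hfact : (∑ i, θ i ^ 2) - (K:ℝ)⁻¹ * (∑ i, θ i) ^ 2
      = (K:ℝ)⁻¹ * ((K:ℝ) * (∑ i, θ i ^ 2) - (∑ i, θ i) ^ 2) := by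
    rw [mul_sub, ← mul_assoc, inv_mul_cancel₀ hK0, one_mul]
  rw [hfact]
  ring
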